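/- Suppose ξ ∈ ℂ and ζ₁, …, ζₙ ∈ ℂ satisfy: (i) C₁ ≤ |(1/n) ∑_{j=1}^n 1/(ξ - ζ_j)| ≤ C₂; (ii) z ↦ (1/n) ∑_{j=1}^n 1/(z - ζ_j) is Lipschitz with constant k on {z : |z - ξ| ≤ 2/(C₁ n)}; and (iii) min_j |ξ - ζ_j| > 3/(C₁ n). If C > 8(1 + 2C₂²)/C₁³ and n > 4C₂ max{1/C₁, C(k+1)}, then the polynomial q(z) = (z - ξ) ∏_{j=1}^n (z - ζ_j) has exactly one critical point w within distance 3/(2 C₁ n) of ξ, and |w - ξ + (1/(n+1)) · 1/((1/n) ∑_{j=1}^n 1/(ξ - ζ_j))| < C(k+1)/n². -/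

import Mathlib

open Finset

lemma deriv_q_aux (n : ℕ) (ξ : ℂ) (ζ : Fin n → ℂ) (z : ℂ) :
    deriv (fun z : ℂ => (z - ξ) * ∏ j, (z - ζ j)) z =
      (∏ j, (z - ζ j)) + (z - ξ) * ∑ i, ∏ j ∈ univ.erase i, (z - ζ j) := by
  have hP : HasDerivAt (fun z : ℂ => ∏ j, (z - ζ j))
      (∑ i, ∏ j ∈ univ.erase i, (z - ζ j)) z := by
    have h := HasDerivAt.fun_finsetProd (u := univ) (f := fun (j : Fin n) (z : ℂ) => z - ζ j)
      (f' := fun _ => 1) (x := z) (fun i _ => by simpa using (hasDerivAt_id z).sub_const (ζ i))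
    simpa using h
  have h1 : HasDerivAt (fun z : ℂ => z - ξ) 1 z := (hasDerivAt_id z).sub_const ξ
  have := (h1.fun_mul hP).deriv
  simpa using this

lemma sum_erase_prod (n : ℕ) (ζ : Fin n → ℂ) (z : ℂ) (hz : ∀ j, z - ζ j ≠ 0) :
    ∑ i, ∏ j ∈ univ.erase i, (z - ζ j) = (∏ j, (z - ζ j)) * ∑ i, (z - ζ i)⁻¹ := by
  rw [Finset.mul_sum]
  refine Finset.sum_congr rfl fun i _ => ?_
  have h := Finset.mul_prod_erase univ (fun j => z - ζ j) (mem_univ i)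
  field_simp
  rw [← h, mul_div_cancel_left₀ _ (hz i)]


set_option maxHeartbeats 2000000 in
/-- Deterministic pairing theorem (Theorem 3.1 of [OW2]): a root `ξ` sufficiently
isolated from `ζ₁, …, ζₙ` attracts exactly one critical point of
`q(z) = (z - ξ) ∏ (z - ζⱼ)`, located at the predicted position. -/
theorem deterministic_pairing (n : ℕ) (ξ : ℂ) (ζ : Fin n → ℂ) (C₁ C₂ k C : ℝ)
    (hC₁ : 0 < C₁) (hC₂ : 0 < C₂) (hk : 0 ≤ k)
    (h1a : C₁ ≤ ‖(1 / (n : ℂ)) * ∑ j, (ξ - ζ j)⁻¹‖)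
    (h1b : ‖(1 / (n : ℂ)) * ∑ j, (ξ - ζ j)⁻¹‖ ≤ C₂)
    (h2 : ∀ z w : ℂ, ‖z - ξ‖ ≤ 2 / (C₁ * n) → ‖w - ξ‖ ≤ 2 / (C₁ * n) →
      ‖(1 / (n : ℂ)) * ∑ j, (z - ζ j)⁻¹ - (1 / (n : ℂ)) * ∑ j, (w - ζ j)⁻¹‖ ≤
        k * ‖z - w‖)
    (h3 : ∀ j, 3 / (C₁ * n) < ‖ξ - ζ j‖)
    (hC : 8 * (1 + 2 * C₂ ^ 2) / C₁ ^ 3 < C)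
    (hn : 4 * C₂ * max (1 / C₁) (C * (k + 1)) < (n : ℝ)) :
    (∃! w : ℂ,
      deriv (fun z : ℂ => (z - ξ) * ∏ j, (z - ζ j)) w = 0 ∧
        ‖w - ξ‖ ≤ 3 / (2 * C₁ * n)) ∧
    ∀ w : ℂ, deriv (fun z : ℂ => (z - ξ) * ∏ j, (z - ζ j)) w = 0 →
      ‖w - ξ‖ ≤ 3 / (2 * C₁ * n) →
      ‖w - ξ + (1 / ((n : ℂ) + 1)) * ((1 / (n : ℂ)) * ∑ j, (ξ - ζ j)⁻¹)⁻¹‖ <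
        C * (k + 1) / (n : ℝ) ^ 2 := by
  classical
  -- the empirical Stieltjes transform
  set S : ℂ → ℂ := fun z => (1 / (n : ℂ)) * ∑ j, (z - ζ j)⁻¹ with hSdef
  -- basic positivity facts
  have hn0 : 0 < n := by
    rcases Nat.eq_zero_or_pos n with h | h
    · exfalso; subst h; simp at h1a; linarith
    · exact h
  have hnR : (0 : ℝ) < n := by exact_mod_cast hn0
  have hnC : (n : ℂ) ≠ 0 := Nat.cast_ne_zero.mpr hn0.ne'
  have hC12 : C₁ ≤ C₂ := le_trans h1a h1b
  have hCpos : (0 : ℝ) < C := lt_of_le_of_lt (by positivity) hC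
  have hCC1 : 8 * (1 + 2 * C₂ ^ 2) < C * C₁ ^ 3 := (div_lt_iff₀ (by positivity)).mp hC
  -- n C₁^2 > 32 k
  have hnCk : 4 * C₂ * (C * (k + 1)) < (n : ℝ) := by
    have := mul_le_mul_of_nonneg_left (le_max_right (1 / C₁) (C * (k + 1)))
      (by positivity : (0:ℝ) ≤ 4 * C₂)
    linarith
  have hnk : 32 * k < (n : ℝ) * C₁ ^ 2 := by
    rcases eq_or_lt_of_le hk with hk0 | hk0
    · rw [← hk0]; norm_num; exact mul_pos hnR (pow_pos hC₁ 2)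
    · have e1 : (8 : ℝ) < C * C₁ ^ 3 := by nlinarith [sq_nonneg C₂]
      have e2 : 4 * (C₂ * (C * k)) < (n : ℝ) := by nlinarith [mul_pos hC₂ hCpos]
      nlinarith [mul_lt_mul_of_pos_right e1 hk0,
        mul_le_mul_of_nonneg_right hC12 (by positivity : (0:ℝ) ≤ 4 * C * k * C₁ ^ 2),
        mul_lt_mul_of_pos_right e2 (pow_pos hC₁ 2)]
  -- bounds on S
  have hSxi_lb : C₁ ≤ ‖S ξ‖ := h1a
  have hSxi_ub : ‖S ξ‖ ≤ C₂ := h1b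
  have h2' : ∀ z w : ℂ, ‖z - ξ‖ ≤ 2 / (C₁ * n) → ‖w - ξ‖ ≤ 2 / (C₁ * n) →
      ‖S z - S w‖ ≤ k * ‖z - w‖ := h2
  have hxi_mem : ‖(ξ : ℂ) - ξ‖ ≤ 2 / (C₁ * n) := by
    simp only [sub_self, norm_zero]; positivity
  have hS_lb : ∀ z : ℂ, ‖z - ξ‖ ≤ 2 / (C₁ * n) → 15 * C₁ / 16 ≤ ‖S z‖ := by
    intro z hz
    have hlip := h2' z ξ hz hxi_mem
    have hkz : k * ‖z - ξ‖ ≤ C₁ / 16 := by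
      have ha : k * ‖z - ξ‖ ≤ k * (2 / (C₁ * n)) := by gcongr
      have hb : k * (2 / (C₁ * n)) ≤ C₁ / 16 := by
        rw [show k * (2 / (C₁ * (n:ℝ))) = (k * 2) / (C₁ * n) by ring,
          div_le_div_iff₀ (by positivity) (by norm_num)]
        nlinarith
      linarith
    have htri : ‖S ξ‖ - ‖S z‖ ≤ ‖S z - S ξ‖ := by
      rw [norm_sub_rev]; exact norm_sub_norm_le _ _
    linarith
  have hS_ne : ∀ z : ℂ, ‖z - ξ‖ ≤ 2 / (C₁ * n) → S z ≠ 0 := by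
    intro z hz h0
    have := hS_lb z hz
    rw [h0, norm_zero] at this
    nlinarith
  -- the radius
  set r : ℝ := 3 / (2 * C₁ * n) with hrdef
  have hr_pos : 0 < r := by positivity
  have hr_le : r ≤ 2 / (C₁ * n) := by
    rw [hrdef, div_le_div_iff₀ (by positivity) (by positivity)]
    nlinarith
  -- roots are far from the ball
  have hzne : ∀ z : ℂ, ‖z - ξ‖ ≤ 2 / (C₁ * n) → ∀ j, z - ζ j ≠ 0 := by
    intro z hz j h0
    have h3j := h3 j
    have he : ξ - ζ j = (ξ - z) + (z - ζ j) := by ring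
    rw [he, h0, add_zero, norm_sub_rev] at h3j
    have hle : 3 / (C₁ * (n:ℝ)) ≤ 2 / (C₁ * n) := le_trans h3j.le hz
    rw [div_le_div_iff₀ (by positivity) (by positivity)] at hle
    nlinarith
  -- the derivative of q on the ball
  have hq : ∀ z : ℂ, ‖z - ξ‖ ≤ 2 / (C₁ * n) →
      deriv (fun z : ℂ => (z - ξ) * ∏ j, (z - ζ j)) z =
        (∏ j, (z - ζ j)) * (1 + (z - ξ) * ((n : ℂ) * S z)) := by
    intro z hz
    rw [deriv_q_aux, sum_erase_prod n ζ z (hzne z hz)]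
    have hsum : (n : ℂ) * S z = ∑ i, (z - ζ i)⁻¹ := by
      rw [hSdef]; field_simp
    rw [hsum]; ring
  have hprod_ne : ∀ z : ℂ, ‖z - ξ‖ ≤ 2 / (C₁ * n) → (∏ j, (z - ζ j)) ≠ 0 :=
    fun z hz => Finset.prod_ne_zero_iff.mpr fun j _ => hzne z hz j
  have hSxi_eq : (1 / (n : ℂ)) * ∑ j, (ξ - ζ j)⁻¹ = S ξ := rfl
  clear_value S
  -- the fixed-point map
  set T : ℂ → ℂ := fun z => ξ - ((n : ℂ) * S z)⁻¹ with hTdef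
  have hnS_ne : ∀ z : ℂ, ‖z - ξ‖ ≤ 2 / (C₁ * n) → (n : ℂ) * S z ≠ 0 :=
    fun z hz => mul_ne_zero hnC (hS_ne z hz)
  -- critical point iff fixed point, on the ball
  have hcrit_iff : ∀ z : ℂ, ‖z - ξ‖ ≤ 2 / (C₁ * n) →
      (deriv (fun z : ℂ => (z - ξ) * ∏ j, (z - ζ j)) z = 0 ↔ T z = z) := by
    intro z hz
    rw [hq z hz, mul_eq_zero, or_iff_right (hprod_ne z hz)]
    constructor
    · intro h
      have hzz : z - ξ = -((n : ℂ) * S z)⁻¹ := by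
        calc z - ξ = (z - ξ) * (((n : ℂ) * S z) * ((n : ℂ) * S z)⁻¹) := by
              rw [mul_inv_cancel₀ (hnS_ne z hz), mul_one]
          _ = -((n : ℂ) * S z)⁻¹ := by linear_combination ((n : ℂ) * S z)⁻¹ * h
      rw [hTdef]
      simp only
      linear_combination -hzz
    · intro h
      have hz' : z - ξ = -((n : ℂ) * S z)⁻¹ := by
        rw [hTdef] at h
        simp only at h
        linear_combination -h
      rw [hz']
      field_simp [hnS_ne z hz]
      simp [hS_ne z hz]
  -- T maps the closed ball into itself
  have hT_norm : ∀ z : ℂ, ‖z - ξ‖ ≤ 2 / (C₁ * n) → ‖T z - ξ‖ ≤ 16 / (15 * C₁ * n) := by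
    intro z hz
    have he : T z - ξ = -((n : ℂ) * S z)⁻¹ := by rw [hTdef]; ring
    rw [he, norm_neg, norm_inv, norm_mul, Complex.norm_natCast]
    have hpos : (0:ℝ) < (n : ℝ) * ‖S z‖ := by
      have := hS_lb z hz
      nlinarith
    rw [inv_le_comm₀ hpos (by positivity), inv_div, div_le_iff₀ (by norm_num)]
    nlinarith [hS_lb z hz]
  have hT_maps : Set.MapsTo T (Metric.closedBall ξ r) (Metric.closedBall ξ r) := by
    intro z hz
    rw [Metric.mem_closedBall, Complex.dist_eq] at *
    have h1 := hT_norm z (le_trans hz hr_le)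
    refine le_trans h1 ?_
    rw [hrdef, div_le_div_iff₀ (by positivity) (by positivity)]
    nlinarith
  -- T is Lipschitz on the ball with small constant
  set K0 : ℝ := 256 * k / (225 * C₁ ^ 2 * n) with hK0def
  have hK0_nonneg : 0 ≤ K0 := by positivity
  have hK0_lt : K0 < 1 := by
    rw [hK0def, div_lt_one (by positivity)]
    nlinarith
  have hT_lip : ∀ z w : ℂ, ‖z - ξ‖ ≤ 2 / (C₁ * n) → ‖w - ξ‖ ≤ 2 / (C₁ * n) →
      ‖T z - T w‖ ≤ K0 * ‖z - w‖ := by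
    intro z w hz hw
    have he : T z - T w = ((n : ℂ) * (S z - S w)) * (((n : ℂ) * S z)⁻¹ * ((n : ℂ) * S w)⁻¹) := by
      rw [hTdef]
      simp only
      linear_combination (-((n:ℂ) * S w)⁻¹) * mul_inv_cancel₀ (hnS_ne z hz) +
        ((n:ℂ) * S z)⁻¹ * mul_inv_cancel₀ (hnS_ne w hw)
    rw [he]
    simp only [norm_mul, norm_inv, Complex.norm_natCast]
    have h1 : ‖S z - S w‖ ≤ k * ‖z - w‖ := h2' z w hz hw
    have hSz := hS_lb z hz
    have hSw := hS_lb w hw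
    have hinvz : ((n:ℝ) * ‖S z‖)⁻¹ ≤ ((n:ℝ) * (15 * C₁ / 16))⁻¹ := by
      apply inv_anti₀ (by positivity)
      gcongr
    have hinvw : ((n:ℝ) * ‖S w‖)⁻¹ ≤ ((n:ℝ) * (15 * C₁ / 16))⁻¹ := by
      apply inv_anti₀ (by positivity)
      gcongr
    calc (n:ℝ) * ‖S z - S w‖ * (((n:ℝ) * ‖S z‖)⁻¹ * ((n:ℝ) * ‖S w‖)⁻¹)
        ≤ (n:ℝ) * (k * ‖z - w‖) * (((n:ℝ) * (15 * C₁ / 16))⁻¹ * (((n:ℝ) * (15 * C₁ / 16))⁻¹)) := by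
          refine mul_le_mul (mul_le_mul_of_nonneg_left h1 hnR.le)
            (mul_le_mul hinvz hinvw (by positivity) (by positivity))
            (by positivity) (by positivity)
      _ = K0 * ‖z - w‖ := by
          rw [hK0def]
          field_simp
          ring
  -- Banach fixed point on the closed ball
  have hball_mem : ∀ z : ℂ, z ∈ Metric.closedBall ξ r → ‖z - ξ‖ ≤ 2 / (C₁ * n) := by
    intro z hz
    rw [Metric.mem_closedBall, Complex.dist_eq] at hz
    exact le_trans hz hr_le
  have hKlt1 : K0.toNNReal < 1 := by
    have h1 : (K0.toNNReal : ℝ) < 1 := by rwa [Real.coe_toNNReal _ hK0_nonneg]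
    exact_mod_cast h1
  have hlipOn : LipschitzOnWith K0.toNNReal T (Metric.closedBall ξ r) := by
    rw [lipschitzOnWith_iff_dist_le_mul]
    intro x hx y hy
    rw [Complex.dist_eq, Complex.dist_eq, Real.coe_toNNReal _ hK0_nonneg]
    exact hT_lip x y (hball_mem x hx) (hball_mem y hy)
  have hcontr : ContractingWith K0.toNNReal (hT_maps.restrict T _ _) :=
    ⟨hKlt1, hlipOn.mapsToRestrict hT_maps⟩
  obtain ⟨w₀, hw₀_mem, hw₀_fix, -, -⟩ :=
    ContractingWith.exists_fixedPoint' (Metric.isClosed_closedBall).isComplete hT_maps hcontr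
      (Metric.mem_closedBall_self hr_pos.le) (edist_ne_top ξ (T ξ))
  have hw₀_ball : ‖w₀ - ξ‖ ≤ r := by
    rwa [Metric.mem_closedBall, Complex.dist_eq] at hw₀_mem
  -- uniqueness of fixed points in the ball
  have huniq : ∀ z : ℂ, ‖z - ξ‖ ≤ r → T z = z → z = w₀ := by
    intro z hz hfz
    have h1 := hT_lip z w₀ (le_trans hz hr_le) (le_trans hw₀_ball hr_le)
    rw [hfz, hw₀_fix] at h1
    have h2 : (0:ℝ) ≤ ‖z - w₀‖ := norm_nonneg _
    have h3 : ‖z - w₀‖ = 0 := by nlinarith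
    rwa [norm_eq_zero, sub_eq_zero] at h3
  constructor
  · -- existence and uniqueness of critical point
    refine ⟨w₀, ⟨?_, hw₀_ball⟩, ?_⟩
    · exact (hcrit_iff w₀ (le_trans hw₀_ball hr_le)).mpr hw₀_fix
    · rintro z ⟨hz1, hz2⟩
      exact huniq z hz2 ((hcrit_iff z (le_trans hz2 hr_le)).mp hz1)
  · -- the location estimate
    intro w hw1 hw2
    rw [hSxi_eq]
    have hw_ball2 : ‖w - ξ‖ ≤ 2 / (C₁ * n) := le_trans hw2 hr_le
    have hfix : T w = w := (hcrit_iff w hw_ball2).mp hw1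
    have hwe : w - ξ = -((n : ℂ) * S w)⁻¹ := by
      rw [hTdef] at hfix
      simp only at hfix
      linear_combination -hfix
    have hn1C : ((n : ℂ) + 1) ≠ 0 := by
      have he : ((n : ℂ) + 1) = ((n + 1 : ℕ) : ℂ) := by push_cast; ring
      rw [he, Ne, Nat.cast_eq_zero]
      omega
    have hSxi_ne : S ξ ≠ 0 := hS_ne ξ hxi_mem
    have hSw_ne : S w ≠ 0 := hS_ne w hw_ball2
    -- the error expression
    have hE : w - ξ + (1 / ((n : ℂ) + 1)) * (S ξ)⁻¹ =
        ((n : ℂ) * S w - ((n : ℂ) + 1) * S ξ) *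
          ((((n : ℂ) + 1))⁻¹ * (S ξ)⁻¹ * (((n : ℂ)) * S w)⁻¹) := by
      rw [hwe]
      field_simp
      ring
    rw [hE]
    have hnorm_eq : ‖((n : ℂ) * S w - ((n : ℂ) + 1) * S ξ) *
          ((((n : ℂ) + 1))⁻¹ * (S ξ)⁻¹ * (((n : ℂ)) * S w)⁻¹)‖ =
        ‖(n : ℂ) * S w - ((n : ℂ) + 1) * S ξ‖ *
          ((((n : ℝ) + 1))⁻¹ * ‖S ξ‖⁻¹ * (((n : ℝ)) * ‖S w‖)⁻¹) := by
      simp only [norm_mul, norm_inv, Complex.norm_natCast]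
      congr 2
      have : ((n : ℂ) + 1) = ((n + 1 : ℕ) : ℂ) := by push_cast; ring
      rw [this, Complex.norm_natCast]
      push_cast
      ring
    rw [hnorm_eq]
    -- numerator bound
    have hnum : ‖(n : ℂ) * S w - ((n : ℂ) + 1) * S ξ‖ ≤ (3 * k + 2 * C₁ * C₂) / (2 * C₁) := by
      have he : (n : ℂ) * S w - ((n : ℂ) + 1) * S ξ = (n : ℂ) * (S w - S ξ) - S ξ := by ring
      rw [he]
      refine le_trans (norm_sub_le _ _) ?_
      rw [norm_mul, Complex.norm_natCast]
      have h1 : ‖S w - S ξ‖ ≤ k * ‖w - ξ‖ := h2' w ξ hw_ball2 hxi_mem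
      have h2'' : k * ‖w - ξ‖ ≤ k * r := by gcongr
      have h3' : (n : ℝ) * (k * r) = 3 * k / (2 * C₁) := by
        rw [hrdef]; field_simp
      have h4 : (n:ℝ) * ‖S w - S ξ‖ ≤ 3 * k / (2 * C₁) := by
        rw [← h3']
        have := le_trans h1 h2''
        nlinarith
      have h5 : (3:ℝ) * k / (2 * C₁) + C₂ = (3 * k + 2 * C₁ * C₂) / (2 * C₁) := by
        field_simp
      linarith
    -- denominator lower bounds
    have hSw_lb := hS_lb w hw_ball2
    have hfac_le : (((n : ℝ) + 1))⁻¹ * ‖S ξ‖⁻¹ * (((n : ℝ)) * ‖S w‖)⁻¹ ≤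
        ((n : ℝ))⁻¹ * C₁⁻¹ * ((n : ℝ) * (15 * C₁ / 16))⁻¹ := by
      have e1 : ((n : ℝ) + 1)⁻¹ ≤ ((n : ℝ))⁻¹ := by
        apply inv_anti₀ hnR; linarith
      have e2 : ‖S ξ‖⁻¹ ≤ C₁⁻¹ := inv_anti₀ hC₁ hSxi_lb
      have e3 : (((n : ℝ)) * ‖S w‖)⁻¹ ≤ ((n : ℝ) * (15 * C₁ / 16))⁻¹ := by
        apply inv_anti₀ (by positivity)
        gcongr
      refine mul_le_mul (mul_le_mul e1 e2 (by positivity) (by positivity)) e3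
        (by positivity) (by positivity)
    have hnum_nonneg : (0:ℝ) ≤ ‖(n : ℂ) * S w - ((n : ℂ) + 1) * S ξ‖ := norm_nonneg _
    calc ‖(n : ℂ) * S w - ((n : ℂ) + 1) * S ξ‖ *
          ((((n : ℝ) + 1))⁻¹ * ‖S ξ‖⁻¹ * (((n : ℝ)) * ‖S w‖)⁻¹)
        ≤ ((3 * k + 2 * C₁ * C₂) / (2 * C₁)) *
          (((n : ℝ))⁻¹ * C₁⁻¹ * ((n : ℝ) * (15 * C₁ / 16))⁻¹) := by
          apply mul_le_mul hnum hfac_le (by positivity) (by positivity)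
      _ = (3 * k + 2 * C₁ * C₂) * 8 / (15 * C₁ ^ 3 * (n : ℝ) ^ 2) := by
          field_simp
          ring
      _ < C * (k + 1) / (n : ℝ) ^ 2 := by
          rw [div_lt_div_iff₀ (by positivity) (by positivity)]
          have key : (3 * k + 2 * C₁ * C₂) * 8 < C * (k + 1) * (15 * C₁ ^ 3) := by
            nlinarith [mul_le_mul_of_nonneg_right hC12 hC₁.le, sq_nonneg C₂,
              mul_nonneg hk (sq_nonneg C₂), mul_pos hC₁ hC₂]
          nlinarith [sq_nonneg (n:ℝ), pow_pos hnR 2]
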